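/- Let n and d be positive integers, let F ∈ (ℂ^n)^{⊗d} be a symmetric tensor with corresponding degree-d polynomial p_F, and let I ⊆ V be a homogeneous ideal with I ⊆ Ann(p_F). Then Υ(I) ⊆ Ann(F). -/

import Mathlib

/-!
Common setup, following the paper "On the abundance of minimal border rank symmetric
tensors verifying Comon's conjecture".

* `S = ℂ[α_{i,j} : 1 ≤ i ≤ d, 1 ≤ j ≤ n]` is modeled as `MvPolynomial (Fin d × Fin n) ℂ`,
  with the `ℤ^d`-grading in which `deg α_{i,j} = e_i`; `Scomp n d u` is the
  multidegree-`u` component (`u : Fin d → ℕ`).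
* `V = ℂ[β_1,…,β_n]` is modeled as `MvPolynomial (Fin n) ℂ` with its standard grading;
  `Vcomp n N` is the degree-`N` component.
* The graded duals `T` and `P` are modeled by the same polynomial rings, with `S`
  (resp. `V`) acting by differentiation (`apolar`); `ann F` is the apolar
  (annihilator) ideal of `F`.
* A tensor `F ∈ (ℂ^n)^{⊗d}` is an element of the multidegree-`(1,…,1)` component
  `Scomp n d (fun _ => 1)` (a multilinear form in the `x_{i,j}`).
-/

open MvPolynomial Submodule Module

noncomputable section

namespace BorderComon

/-- the multidegree-`u` graded component of `S`. -/
def Scomp (n d : ℕ) (u : Fin d → ℕ) : Submodule ℂ (MvPolynomial (Fin d × Fin n) ℂ) :=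
  weightedHomogeneousSubmodule ℂ (fun p : Fin d × Fin n => Pi.single p.1 1) u

/-- the degree-`N` graded component of `V`. -/
def Vcomp (n : ℕ) (N : ℕ) : Submodule ℂ (MvPolynomial (Fin n) ℂ) :=
  homogeneousSubmodule (Fin n) ℂ N

/-- the diagonal ring map `π : S → V`, `α_{i,j} ↦ β_j`. -/
def piAlg (n d : ℕ) : MvPolynomial (Fin d × Fin n) ℂ →ₐ[ℂ] MvPolynomial (Fin n) ℂ :=
  aeval (fun p : Fin d × Fin n => X p.2)

/-- `π` as a `ℂ`-linear map. -/
def piL (n d : ℕ) : MvPolynomial (Fin d × Fin n) ℂ →ₗ[ℂ] MvPolynomial (Fin n) ℂ :=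
  (piAlg n d).toLinearMap

/-- the ring map `ρ : S → V`, `α_{1,j} ↦ β_j` and `α_{i,j} ↦ 0` for `i ≥ 2`
(rows are `0`-indexed, so the first row is row `0`). -/
def rho (n d : ℕ) : MvPolynomial (Fin d × Fin n) ℂ →ₐ[ℂ] MvPolynomial (Fin n) ℂ :=
  aeval (fun p : Fin d × Fin n => if (p.1 : ℕ) = 0 then X p.2 else 0)

/-- the result of differentiating `F` by the monomial `X^a`:
`∂^a X^b = (∏_i b_i!/(b_i-a_i)!) X^{b-a}` (and `= 0` unless `a ≤ b`, which is
automatic since the descending factorial vanishes there). -/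
def diffMon {σ : Type*} (a : σ →₀ ℕ) (F : MvPolynomial σ ℂ) : MvPolynomial σ ℂ :=
  ∑ b ∈ F.support, (F.coeff b * ∏ i ∈ a.support, ((b i).descFactorial (a i) : ℂ)) •
    monomial (b - a) (1 : ℂ)

/-- the apolarity action: `apolar F ψ = ψ ∘ F` is the result of letting `ψ` act on `F`
by differentiation, linearly in `ψ`. -/
def apolar {σ : Type*} (F : MvPolynomial σ ℂ) : MvPolynomial σ ℂ →ₗ[ℂ] MvPolynomial σ ℂ :=
  Finsupp.lsum ℂ (fun a : σ →₀ ℕ => LinearMap.toSpanSingleton ℂ _ (diffMon a F)) ∘ₗ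
    (AddMonoidAlgebra.coeffLinearEquiv ℂ).toLinearMap

/-- the apolar (annihilator) ideal `Ann(F) = {ψ : ψ ∘ F = 0}`, as a subspace. -/
def ann {σ : Type*} (F : MvPolynomial σ ℂ) : Submodule ℂ (MvPolynomial σ ℂ) :=
  LinearMap.ker (apolar F)

/-- the ideal `I_R ⊆ S` generated by the `2×2` minors
`α_{i,j} α_{k,ℓ} − α_{i,ℓ} α_{k,j}`, `i < k`, `j < ℓ`. -/
def IR (n d : ℕ) : Ideal (MvPolynomial (Fin d × Fin n) ℂ) :=
  Ideal.span {q | ∃ i k : Fin d, ∃ j l : Fin n, i < k ∧ j < l ∧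
    q = X (i, j) * X (k, l) - X (i, l) * X (k, j)}

/-- `J ⊆ S` is a (multigraded) homogeneous ideal: it is the sum of its
multigraded components. -/
def IsHomogS (n d : ℕ) (J : Ideal (MvPolynomial (Fin d × Fin n) ℂ)) : Prop :=
  Submodule.restrictScalars ℂ J = ⨆ u : Fin d → ℕ, (Submodule.restrictScalars ℂ J ⊓ Scomp n d u)

/-- `I ⊆ V` is a homogeneous ideal: it is the sum of its graded components. -/
def IsHomogV (n : ℕ) (I : Ideal (MvPolynomial (Fin n) ℂ)) : Prop :=
  Submodule.restrictScalars ℂ I = ⨆ N : ℕ, (Submodule.restrictScalars ℂ I ⊓ Vcomp n N)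

/-- the exponent redistribution underlying `ψ_u`: in the sorted list
`i_1 ≤ ⋯ ≤ i_N` of the indices of the monomial `β^γ` (value `j` occurring `γ j`
times, `N = |γ|`), row `i` receives the block of positions
`[∑_{i'<i} u i', ∑_{i'≤i} u i')`, while value `j` occupies positions
`[∑_{j'<j} γ j', ∑_{j'≤j} γ j')`; hence the exponent of `α_{i,j}` is the size of
the intersection of these two intervals. -/
def distrib (n d : ℕ) (u : Fin d → ℕ) (γ : Fin n →₀ ℕ) : (Fin d × Fin n) →₀ ℕ :=
  Finsupp.equivFunOnFinite.symm fun p : Fin d × Fin n =>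
    min (∑ i ∈ Finset.univ.filter fun i : Fin d => (i : ℕ) ≤ (p.1 : ℕ), u i)
        (∑ j ∈ Finset.univ.filter fun j : Fin n => (j : ℕ) ≤ (p.2 : ℕ), γ j)
    - max (∑ i ∈ Finset.univ.filter fun i : Fin d => (i : ℕ) < (p.1 : ℕ), u i)
          (∑ j ∈ Finset.univ.filter fun j : Fin n => (j : ℕ) < (p.2 : ℕ), γ j)

/-- the linear map `ψ_u : V → S` sending a monomial `β_{i_1} β_{i_2} ⋯ β_{i_N}`
with `i_1 ≤ i_2 ≤ ⋯ ≤ i_N` to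
`(α_{1,i_1} ⋯ α_{1,i_{u_1}}) (α_{2,i_{u_1+1}} ⋯ α_{2,i_{u_1+u_2}}) ⋯`.
(Its restriction to `Vcomp n (∑ i, u i)` is the map `ψ_u : V_{|u|} → S_u` of the
paper.) -/
def psi (n d : ℕ) (u : Fin d → ℕ) :
    MvPolynomial (Fin n) ℂ →ₗ[ℂ] MvPolynomial (Fin d × Fin n) ℂ :=
  (AddMonoidAlgebra.coeffLinearEquiv ℂ).symm.toLinearMap ∘ₗ
    Finsupp.lmapDomain ℂ ℂ (distrib n d u) ∘ₗ (AddMonoidAlgebra.coeffLinearEquiv ℂ).toLinearMap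

/-- `Υ(I) = I_R + ∑_{u} ψ_u(I_{|u|}) ⊆ S`. -/
def Upsilon (n d : ℕ) (I : Ideal (MvPolynomial (Fin n) ℂ)) :
    Submodule ℂ (MvPolynomial (Fin d × Fin n) ℂ) :=
  Submodule.restrictScalars ℂ (IR n d) ⊔
    ⨆ u : Fin d → ℕ, Submodule.map (psi n d u) (Submodule.restrictScalars ℂ I ⊓ Vcomp n (∑ i, u i))

/-- the irrelevant ideal `B_X = ∏_{i=1}^d (α_{i,1},…,α_{i,n}) ⊆ S`. -/
def BX (n d : ℕ) : Ideal (MvPolynomial (Fin d × Fin n) ℂ) :=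
  ∏ i : Fin d, Ideal.span (Set.range fun j : Fin n => X (i, j))

/-- the irrelevant ideal `B_Y = (β_1,…,β_n) ⊆ V`. -/
def BY (n : ℕ) : Ideal (MvPolynomial (Fin n) ℂ) :=
  Ideal.span (Set.range X)

/-- `Σ(J) = ⊕_{a ≥ 0} ⊕_{s ∈ ℰ} π(J_{a𝟏+s}) ⊆ V`, where
`ℰ = {0, e_1, e_1+e_2, …, e_1+⋯+e_{d-1}}` (the element `s` with `m` ones is
`fun i => if i < m then 1 else 0`). -/
def SigmaMap (n d : ℕ) (J : Ideal (MvPolynomial (Fin d × Fin n) ℂ)) :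
    Submodule ℂ (MvPolynomial (Fin n) ℂ) :=
  ⨆ a : ℕ, ⨆ m : Fin d, Submodule.map (piL n d)
    (Submodule.restrictScalars ℂ J ⊓ Scomp n d (fun i => a + if (i : ℕ) < (m : ℕ) then 1 else 0))

/-- the set of tensors of rank at most `r`: sums of `r` decomposable tensors
`v_1 ⊗ ⋯ ⊗ v_d = ∏_i (∑_j v_i(j) x_{i,j})`. -/
def rankLE (n d r : ℕ) : Set (MvPolynomial (Fin d × Fin n) ℂ) :=
  {F | ∃ v : Fin r → Fin d → Fin n → ℂ,
    F = ∑ s : Fin r, ∏ i : Fin d, ∑ j : Fin n, C (v s i j) * X (i, j)}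

/-- `F` has border rank at most `r`: coefficientwise (finitely many coefficients are
involved), `F` lies in the closure of the set of tensors of rank at most `r`. -/
def brkLE (n d : ℕ) (F : MvPolynomial (Fin d × Fin n) ℂ) (r : ℕ) : Prop :=
  (fun m => coeff m F) ∈ closure ((fun G => fun m => coeff m G) '' rankLE n d r)

/-- the border rank of a tensor. -/
def brk (n d : ℕ) (F : MvPolynomial (Fin d × Fin n) ℂ) : ℕ :=
  sInf {r | brkLE n d F r}

/-- polynomials that are sums of `r` `d`-th powers of linear forms. -/
def srankLE (n d r : ℕ) : Set (MvPolynomial (Fin n) ℂ) :=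
  {p | ∃ c : Fin r → Fin n → ℂ, p = ∑ s : Fin r, (∑ j : Fin n, C (c s j) * X j) ^ d}

/-- `p` has symmetric border rank at most `r`. -/
def sbrkLE (n d : ℕ) (p : MvPolynomial (Fin n) ℂ) (r : ℕ) : Prop :=
  (fun m => coeff m p) ∈ closure ((fun q => fun m => coeff m q) '' srankLE n d r)

/-- the symmetric border rank of a degree-`d` form. -/
def sbrk (n d : ℕ) (p : MvPolynomial (Fin n) ℂ) : ℕ :=
  sInf {r | sbrkLE n d p r}

/-- `F` is a symmetric tensor: invariant under the permutations of the `d` factors. -/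
def IsSymm (n d : ℕ) (F : MvPolynomial (Fin d × Fin n) ℂ) : Prop :=
  ∀ τ : Equiv.Perm (Fin d), rename (Prod.map τ id) F = F

/-- the degree-`d` polynomial `p_F` corresponding to a symmetric tensor `F`, obtained
by identifying all the rows of variables (`x_{i,j} ↦ y_j`); `F` is the polarization
of `p_F`. -/
def pF (n d : ℕ) (F : MvPolynomial (Fin d × Fin n) ℂ) : MvPolynomial (Fin n) ℂ :=
  rename Prod.snd F

/-- `F` is concise: the contraction `(ℂ^n)^* → (ℂ^n)^{⊗(d-1)}` of the first tensor
factor, `w ↦ F(x_{1,j} := w_j)`, is injective. -/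
def Concise (n d : ℕ) (F : MvPolynomial (Fin d × Fin n) ℂ) : Prop :=
  Function.Injective fun w : Fin n → ℂ =>
    aeval (fun p : Fin d × Fin n => if (p.1 : ℕ) = 0 then C (w p.2) else X p) F

/-- the ideal `∑_{0<u<𝟏} S·Ann(F)_u` generated by the components `Ann(F)_u`,
`0 < u < 𝟏` (componentwise). -/
def midIdeal (n d : ℕ) (F : MvPolynomial (Fin d × Fin n) ℂ) :
    Ideal (MvPolynomial (Fin d × Fin n) ℂ) :=
  Ideal.span (⋃ u ∈ {u : Fin d → ℕ | 0 < u ∧ u < fun _ => 1},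
    ((ann F ⊓ Scomp n d u : Submodule ℂ (MvPolynomial (Fin d × Fin n) ℂ)) :
      Set (MvPolynomial (Fin d × Fin n) ℂ)))

/-- `F` is a *sharp* tensor:
(1) `Ann(F)` has exactly `n-1` minimal generators of multidegree `𝟏`;
(2) `dim (S/Ann F)_u = n` for all `0 < u < 𝟏`;
(3) `dim (S/(Ann(F)_{e_i+e_j}))_{s e_i + e_j} = n` for all `i ≠ j`, `1 ≤ s ≤ d-1`. -/
def Sharp (n d : ℕ) (F : MvPolynomial (Fin d × Fin n) ℂ) : Prop :=
  (finrank ℂ (ann F ⊓ Scomp n d fun _ => 1 :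
        Submodule ℂ (MvPolynomial (Fin d × Fin n) ℂ)) -
      finrank ℂ (Submodule.restrictScalars ℂ (midIdeal n d F) ⊓ Scomp n d fun _ => 1 :
        Submodule ℂ (MvPolynomial (Fin d × Fin n) ℂ)) = n - 1) ∧
  (∀ u : Fin d → ℕ, 0 < u → u < (fun _ => 1) →
    finrank ℂ (Scomp n d u ⧸ Submodule.comap (Scomp n d u).subtype (ann F)) = n) ∧
  (∀ i j : Fin d, i ≠ j → ∀ s : ℕ, 1 ≤ s → s ≤ d - 1 →
    finrank ℂ (Scomp n d (Pi.single i s + Pi.single j 1) ⧸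
      Submodule.comap (Scomp n d (Pi.single i s + Pi.single j 1)).subtype
        (Submodule.restrictScalars ℂ (Ideal.span
          ((ann F ⊓ Scomp n d (Pi.single i 1 + Pi.single j 1) :
            Submodule ℂ (MvPolynomial (Fin d × Fin n) ℂ)) :
            Set (MvPolynomial (Fin d × Fin n) ℂ))))) = n)

/-! ### Auxiliary lemmas for `stmt_8` -/

section Aux

open Finset

/-- descending factorial composition identity -/
private lemma descFactorial_add_aux (m x y : ℕ) :
    (m + x + y).descFactorial (y + x)
      = (m + x + y).descFactorial y * (m + x).descFactorial x := by
  induction y with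
  | zero => simp
  | succ y ih =>
    rw [show m + x + (y + 1) = (m + x + y) + 1 from rfl,
      show y + 1 + x = (y + x) + 1 from by omega,
      Nat.succ_descFactorial_succ, Nat.succ_descFactorial_succ, ih, mul_assoc]

variable {σ : Type*} [Fintype σ] [DecidableEq σ]

lemma coeff_diffMon (a : σ →₀ ℕ) (F : MvPolynomial σ ℂ) (c : σ →₀ ℕ) :
    (diffMon a F).coeff c
      = F.coeff (c + a) * ∏ i : σ, (((c + a) i).descFactorial (a i) : ℂ) := by
  classical
  rw [diffMon, MvPolynomial.coeff_sum]
  rw [Finset.sum_eq_single (c + a) ?h0 ?h1]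
  · rw [MvPolynomial.coeff_smul, MvPolynomial.coeff_monomial,
      if_pos (add_tsub_cancel_right c a), smul_eq_mul, mul_one]
    congr 1
    refine Finset.prod_subset (Finset.subset_univ _) ?_
    intro i _ hi
    rw [Finsupp.notMem_support_iff.mp hi, Nat.descFactorial_zero, Nat.cast_one]
  case h0 =>
    intro b _ hne
    rw [MvPolynomial.coeff_smul, MvPolynomial.coeff_monomial]
    by_cases h : b - a = c
    · have hab : ¬ a ≤ b := by
        intro hle
        exact hne (by rw [← tsub_add_cancel_of_le hle, h])
      rw [Finsupp.le_iff] at hab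
      push_neg at hab
      obtain ⟨i, hi, hlt⟩ := hab
      have hz : ((b i).descFactorial (a i) : ℂ) = 0 := by
        rw [Nat.cast_eq_zero, Nat.descFactorial_eq_zero_iff_lt]; exact hlt
      rw [Finset.prod_eq_zero hi hz, mul_zero, zero_smul]
    · rw [if_neg h, smul_zero]
  case h1 =>
    intro h
    rw [MvPolynomial.notMem_support_iff.mp h, zero_mul, zero_smul,
      MvPolynomial.coeff_zero]

lemma diffMon_comp (a b : σ →₀ ℕ) (F : MvPolynomial σ ℂ) :
    diffMon (a + b) F = diffMon a (diffMon b F) := by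
  apply MvPolynomial.ext; intro c
  rw [coeff_diffMon, coeff_diffMon, coeff_diffMon,
    show c + (a + b) = c + a + b from (add_assoc c a b).symm, mul_assoc,
    ← Finset.prod_mul_distrib]
  congr 1
  refine Finset.prod_congr rfl fun i _ => ?_
  rw [← Nat.cast_mul]
  congr 1
  simp only [Finsupp.add_apply]
  rw [show a i + b i = b i + a i from add_comm _ _]
  exact descFactorial_add_aux (c i) (a i) (b i)

lemma diffMon_smul (a : σ →₀ ℕ) (r : ℂ) (F : MvPolynomial σ ℂ) :
    diffMon a (r • F) = r • diffMon a F := by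
  apply MvPolynomial.ext; intro c
  rw [coeff_diffMon, MvPolynomial.coeff_smul, MvPolynomial.coeff_smul, coeff_diffMon,
    smul_eq_mul, smul_eq_mul, mul_assoc]

lemma diffMon_add_poly (a : σ →₀ ℕ) (F G : MvPolynomial σ ℂ) :
    diffMon a (F + G) = diffMon a F + diffMon a G := by
  apply MvPolynomial.ext; intro c
  rw [coeff_diffMon, MvPolynomial.coeff_add, MvPolynomial.coeff_add, coeff_diffMon,
    coeff_diffMon, add_mul]

lemma diffMon_zero_poly (a : σ →₀ ℕ) : diffMon a (0 : MvPolynomial σ ℂ) = 0 := by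
  apply MvPolynomial.ext; intro c
  rw [coeff_diffMon, MvPolynomial.coeff_zero, MvPolynomial.coeff_zero, zero_mul]

lemma apolar_apply (F ψ : MvPolynomial σ ℂ) :
    apolar F ψ = Finsupp.sum (AddMonoidAlgebra.coeff ψ) fun a r => r • diffMon a F := rfl

lemma apolar_monomial (F : MvPolynomial σ ℂ) (a : σ →₀ ℕ) (r : ℂ) :
    apolar F (monomial a r) = r • diffMon a F := by
  rw [apolar_apply, ← single_eq_monomial]
  exact Finsupp.sum_single_index (zero_smul ℂ (diffMon a F))

lemma coeff_apolar (F ψ : MvPolynomial σ ℂ) (c : σ →₀ ℕ) :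
    (apolar F ψ).coeff c = ∑ a ∈ ψ.support, ψ.coeff a *
      (F.coeff (c + a) * ∏ i : σ, (((c + a) i).descFactorial (a i) : ℂ)) := by
  rw [apolar_apply, Finsupp.sum, MvPolynomial.coeff_sum]
  refine Finset.sum_congr rfl fun a _ => ?_
  rw [MvPolynomial.coeff_smul, coeff_diffMon, smul_eq_mul]
  rfl

lemma apolar_zero_left (ψ : MvPolynomial σ ℂ) : apolar (0 : MvPolynomial σ ℂ) ψ = 0 := by
  rw [apolar_apply, Finsupp.sum]
  exact Finset.sum_eq_zero fun a _ => by rw [diffMon_zero_poly, smul_zero]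

lemma apolar_add_left (F G ψ : MvPolynomial σ ℂ) :
    apolar (F + G) ψ = apolar F ψ + apolar G ψ := by
  rw [apolar_apply, apolar_apply, apolar_apply, Finsupp.sum, Finsupp.sum, Finsupp.sum,
    ← Finset.sum_add_distrib]
  exact Finset.sum_congr rfl fun a _ => by rw [diffMon_add_poly, smul_add]

lemma apolar_smul_left (r : ℂ) (F ψ : MvPolynomial σ ℂ) :
    apolar (r • F) ψ = r • apolar F ψ := by
  rw [apolar_apply, apolar_apply, Finsupp.sum, Finsupp.sum, Finset.smul_sum]
  exact Finset.sum_congr rfl fun a _ => by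
    rw [diffMon_smul, smul_comm]

lemma apolar_mul (F : MvPolynomial σ ℂ) (p q : MvPolynomial σ ℂ) :
    apolar F (p * q) = apolar (apolar F q) p := by
  induction p using MvPolynomial.induction_on' with
  | add p₁ p₂ hp₁ hp₂ => rw [add_mul, map_add, hp₁, hp₂, map_add]
  | monomial a r =>
    induction q using MvPolynomial.induction_on' with
    | add q₁ q₂ hq₁ hq₂ => rw [mul_add, map_add, hq₁, hq₂, map_add, apolar_add_left]
    | monomial b s =>
      rw [monomial_mul, apolar_monomial, apolar_monomial, apolar_monomial,
        diffMon_comp, diffMon_smul, smul_smul]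

/-- the apolar annihilator as an ideal -/
def annIdeal (F : MvPolynomial σ ℂ) : Ideal (MvPolynomial σ ℂ) where
  carrier := {ψ | apolar F ψ = 0}
  zero_mem' := map_zero _
  add_mem' := by
    intro x y hx hy
    simp only [Set.mem_setOf_eq] at *
    rw [map_add, hx, hy, add_zero]
  smul_mem' := by
    intro r x hx
    simp only [Set.mem_setOf_eq, smul_eq_mul] at *
    rw [apolar_mul, hx, apolar_zero_left]

lemma mem_annIdeal_iff {F ψ : MvPolynomial σ ℂ} :
    ψ ∈ annIdeal F ↔ apolar F ψ = 0 := Iff.rfl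

lemma mem_ann_iff {F ψ : MvPolynomial σ ℂ} : ψ ∈ ann F ↔ apolar F ψ = 0 :=
  LinearMap.mem_ker

end Aux

section Aux2

open Finset

variable {n d : ℕ}

/-- row sums of an exponent vector -/
def rsum (b : (Fin d × Fin n) →₀ ℕ) (i : Fin d) : ℕ := ∑ j : Fin n, b (i, j)

/-- column sums of an exponent vector -/
def csum (b : (Fin d × Fin n) →₀ ℕ) (j : Fin n) : ℕ := ∑ i : Fin d, b (i, j)

lemma rsum_add (a b : (Fin d × Fin n) →₀ ℕ) (i : Fin d) :
    rsum (a + b) i = rsum a i + rsum b i := by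
  simp [rsum, Finsupp.add_apply, Finset.sum_add_distrib]

lemma apply_le_rsum (b : (Fin d × Fin n) →₀ ℕ) (p : Fin d × Fin n) :
    b p ≤ rsum b p.1 := by
  have := Finset.single_le_sum (f := fun j => b (p.1, j))
    (fun j _ => Nat.zero_le _) (Finset.mem_univ p.2)
  simpa [rsum] using this

lemma coeff_perm {F : MvPolynomial (Fin d × Fin n) ℂ} (hsym : IsSymm n d F)
    (τ : Equiv.Perm (Fin d)) (b : (Fin d × Fin n) →₀ ℕ) :
    F.coeff (Finsupp.mapDomain (Prod.map ⇑τ id) b) = F.coeff b := by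
  conv_lhs => rw [← hsym τ]
  exact coeff_rename_mapDomain _ (τ.injective.prodMap fun _ _ h => h) F b

lemma rsum_eq_one {F : MvPolynomial (Fin d × Fin n) ℂ}
    (hF : F ∈ Scomp n d fun _ => 1) {b : (Fin d × Fin n) →₀ ℕ}
    (hb : F.coeff b ≠ 0) (i : Fin d) : rsum b i = 1 := by
  have h : Finsupp.weight (fun p : Fin d × Fin n => Pi.single p.1 1) b = fun _ => 1 :=
    (mem_weightedHomogeneousSubmodule _ _ _ _).mp hF hb
  have h2 := congrFun h i
  rw [Finsupp.weight_apply, Finsupp.sum, Finset.sum_apply] at h2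
  rw [rsum, ← h2]
  have hterm : ∀ p : Fin d × Fin n,
      (b p • (Pi.single p.1 1 : Fin d → ℕ)) i = if i = p.1 then b p else 0 := by
    intro p
    rw [Pi.smul_apply, Pi.single_apply, smul_eq_mul]
    split_ifs <;> simp
  calc ∑ j : Fin n, b (i, j)
      = ∑ x : Fin d, if i = x then ∑ j : Fin n, b (x, j) else 0 := by
        rw [Finset.sum_ite_eq Finset.univ i fun x => ∑ j : Fin n, b (x, j)]
        simp
    _ = ∑ p : Fin d × Fin n, if i = p.1 then b p else 0 := by
        rw [Fintype.sum_prod_type]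
        exact Finset.sum_congr rfl fun x _ => by by_cases h' : i = x <;> simp [h']
    _ = ∑ p ∈ b.support, if i = p.1 then b p else 0 := by
        refine (Finset.sum_subset (Finset.subset_univ _) fun p _ hp => ?_).symm
        rw [Finsupp.notMem_support_iff.mp hp]
        simp
    _ = ∑ p ∈ b.support, (b p • (Pi.single p.1 1 : Fin d → ℕ)) i :=
        Finset.sum_congr rfl fun p _ => (hterm p).symm

lemma vdeg {N : ℕ} {ψ : MvPolynomial (Fin n) ℂ} (hψ : ψ ∈ Vcomp n N)
    {γ : Fin n →₀ ℕ} (hγ : ψ.coeff γ ≠ 0) : ∑ j : Fin n, γ j = N := by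
  have h : Finsupp.weight (1 : Fin n → ℕ) γ = N := hψ hγ
  rw [Finsupp.weight_apply, Finsupp.sum] at h
  simp only [Pi.one_apply, smul_eq_mul, mul_one] at h
  rw [← h]
  exact (Finset.sum_subset (Finset.subset_univ _) fun j _ hj => by
    rw [Finsupp.notMem_support_iff.mp hj]).symm

end Aux2
section Aux3

open Finset

variable {n d : ℕ}

/-- partial sums with a `ℕ` cutoff -/
def psum {m : ℕ} (u : Fin m → ℕ) (k : ℕ) : ℕ :=
  ∑ i ∈ Finset.univ.filter fun i : Fin m => (i : ℕ) < k, u i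

lemma psum_mono {m : ℕ} (u : Fin m → ℕ) : Monotone (psum u) := by
  intro k l hkl
  exact Finset.sum_le_sum_of_subset
    (Finset.monotone_filter_right _ fun i _ hi => lt_of_lt_of_le hi hkl)

lemma psum_zero {m : ℕ} (u : Fin m → ℕ) : psum u 0 = 0 := by
  simp [psum]

lemma psum_top {m : ℕ} (u : Fin m → ℕ) {k : ℕ} (h : m ≤ k) : psum u k = ∑ i, u i := by
  rw [psum, Finset.filter_true_of_mem fun i _ => lt_of_lt_of_le i.isLt h]

lemma psum_succ {m : ℕ} (u : Fin m → ℕ) (i : Fin m) :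
    psum u ((i : ℕ) + 1) = psum u (i : ℕ) + u i := by
  rw [psum, psum,
    show (Finset.univ.filter fun i' : Fin m => (i' : ℕ) < (i : ℕ) + 1)
      = insert i (Finset.univ.filter fun i' : Fin m => (i' : ℕ) < (i : ℕ)) from by
        ext i'
        simp only [Finset.mem_filter, Finset.mem_univ, true_and, Finset.mem_insert,
          Fin.ext_iff]
        omega,
    Finset.sum_insert (by simp)]
  omega

lemma distrib_apply (u : Fin d → ℕ) (γ : Fin n →₀ ℕ) (i : Fin d) (j : Fin n) :
    distrib n d u γ (i, j)
      = min (psum u ((i : ℕ) + 1)) (psum (⇑γ) ((j : ℕ) + 1))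
        - max (psum u (i : ℕ)) (psum (⇑γ) (j : ℕ)) := by
  have h1 : ∀ (m : ℕ) (v : Fin m → ℕ) (k : Fin m),
      (∑ x ∈ Finset.univ.filter fun x : Fin m => (x : ℕ) ≤ (k : ℕ), v x)
        = psum v ((k : ℕ) + 1) := by
    intro m v k
    rw [psum]
    congr 1
    ext x
    simp [Nat.lt_succ_iff]
  rw [distrib, Finsupp.equivFunOnFinite_symm_apply_apply, h1, h1]
  rfl

private lemma tel_pt (A' A b' b : ℕ) (hA : A' ≤ A) (hb : b' ≤ b) :
    min A b - max A' b' = max A' (min A b) - max A' (min A b') := by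
  omega

private lemma key_tel (A' A : ℕ) (h : A' ≤ A) (g : ℕ → ℕ) (hg : Monotone g)
    (h0 : g 0 = 0) (N : ℕ) (htop : A ≤ g N) :
    ∑ m ∈ Finset.range N, (min A (g (m + 1)) - max A' (g m)) = A - A' := by
  have hpt : ∀ m ∈ Finset.range N, min A (g (m + 1)) - max A' (g m)
      = (fun m => max A' (min A (g m))) (m + 1) - (fun m => max A' (min A (g m))) m :=
    fun m _ => tel_pt A' A (g m) (g (m + 1)) h (hg (Nat.le_succ m))
  rw [Finset.sum_congr rfl hpt,
    Finset.sum_range_tsub (f := fun m => max A' (min A (g m)))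
      (fun k l hkl => max_le_max le_rfl (min_le_min le_rfl (hg hkl)))]
  rw [h0]
  omega

lemma rsum_distrib (u : Fin d → ℕ) (γ : Fin n →₀ ℕ)
    (h : ∑ j : Fin n, γ j = ∑ i : Fin d, u i) (i : Fin d) :
    rsum (distrib n d u γ) i = u i := by
  have hrow : rsum (distrib n d u γ) i
      = ∑ m ∈ Finset.range n,
          (min (psum u ((i : ℕ) + 1)) (psum (⇑γ) (m + 1))
            - max (psum u (i : ℕ)) (psum (⇑γ) m)) := by
    rw [rsum, ← Fin.sum_univ_eq_sum_range]
    exact Finset.sum_congr rfl fun j _ => distrib_apply u γ i j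
  have htop : psum u ((i : ℕ) + 1) ≤ psum (⇑γ) n := by
    rw [psum_top (⇑γ) le_rfl, h]
    rw [show (∑ i : Fin d, u i) = psum u d from (psum_top u le_rfl).symm]
    exact psum_mono u i.isLt
  rw [hrow, key_tel _ _ (psum_mono u (Nat.le_succ _)) (psum (⇑γ)) (psum_mono ⇑γ)
    (psum_zero ⇑γ) n htop, psum_succ]
  omega

lemma csum_distrib (u : Fin d → ℕ) (γ : Fin n →₀ ℕ)
    (h : ∑ j : Fin n, γ j = ∑ i : Fin d, u i) (j : Fin n) :
    csum (distrib n d u γ) j = γ j := by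
  have hcol : csum (distrib n d u γ) j
      = ∑ m ∈ Finset.range d,
          (min (psum (⇑γ) ((j : ℕ) + 1)) (psum u (m + 1))
            - max (psum (⇑γ) (j : ℕ)) (psum u m)) := by
    rw [csum, ← Fin.sum_univ_eq_sum_range]
    refine Finset.sum_congr rfl fun i _ => ?_
    rw [distrib_apply u γ i j, min_comm, max_comm]
  have htop : psum (⇑γ) ((j : ℕ) + 1) ≤ psum u d := by
    rw [psum_top u le_rfl, ← h]
    rw [show (∑ j : Fin n, γ j) = psum (⇑γ) n from (psum_top (⇑γ) le_rfl).symm]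
    exact psum_mono (⇑γ) j.isLt
  rw [hcol, key_tel _ _ (psum_mono (⇑γ) (Nat.le_succ _)) (psum u) (psum_mono u)
    (psum_zero u) d htop, psum_succ]
  omega

end Aux3
section Aux4

open Finset

variable {n d : ℕ}

/-- the multilinear exponent vector attached to `J : Fin d → Fin n` -/
def rowF (J : Fin d → Fin n) : (Fin d × Fin n) →₀ ℕ :=
  ∑ i : Fin d, Finsupp.single (i, J i) 1

lemma rowF_apply (J : Fin d → Fin n) (i : Fin d) (j : Fin n) :
    rowF J (i, j) = if J i = j then 1 else 0 := by
  classical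
  rw [rowF, Finsupp.finset_sum_apply,
    Finset.sum_eq_single i
      (fun i' _ hne => by
        rw [Finsupp.single_apply, if_neg]
        simp only [Prod.mk.injEq, not_and]
        exact fun h => absurd h hne)
      (fun h => absurd (Finset.mem_univ i) h),
    Finsupp.single_apply]
  by_cases h : J i = j
  · rw [if_pos (by rw [h]), if_pos h]
  · rw [if_neg (by simp [h]), if_neg h]

lemma rowF_injective : Function.Injective (rowF (n := n) (d := d)) := by
  intro J J' h
  funext i
  have h1 : rowF J (i, J i) = rowF J' (i, J i) := by rw [h]
  rw [rowF_apply, rowF_apply, if_pos rfl] at h1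
  by_contra hne
  rw [if_neg fun hh : J' i = J i => hne hh.symm] at h1
  exact one_ne_zero h1

lemma exists_rowF {b : (Fin d × Fin n) →₀ ℕ} (hml : ∀ i, rsum b i = 1) :
    ∃ J : Fin d → Fin n, b = rowF J := by
  have hex : ∀ i : Fin d, ∃ j, b (i, j) ≠ 0 := by
    intro i
    by_contra h
    push_neg at h
    have h0 : rsum b i = 0 := Finset.sum_eq_zero fun j _ => h j
    rw [hml i] at h0
    exact one_ne_zero h0
  choose J hJ using hex
  refine ⟨J, ?_⟩
  ext p
  obtain ⟨i, j⟩ := p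
  rw [rowF_apply]
  have h1 : 1 ≤ b (i, J i) := Nat.one_le_iff_ne_zero.mpr (hJ i)
  have hrs := hml i
  by_cases h : J i = j
  · subst h
    rw [if_pos rfl]
    have h2 : b (i, J i) ≤ rsum b i := apply_le_rsum b (i, J i)
    omega
  · rw [if_neg h]
    by_contra hbj
    have h2 : b (i, J i) + b (i, j) ≤ rsum b i := by
      have hss : ∑ x ∈ ({J i, j} : Finset (Fin n)), b (i, x) ≤ rsum b i :=
        Finset.sum_le_sum_of_subset fun x _ => Finset.mem_univ x
      rwa [Finset.sum_pair (show J i ≠ j from h)] at hss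
    omega

lemma csum_rowF (J : Fin d → Fin n) (v : Fin n) :
    csum (rowF J) v = (Finset.univ.filter fun i => J i = v).card := by
  rw [Finset.card_filter, csum]
  exact Finset.sum_congr rfl fun i _ => by rw [rowF_apply]

lemma mapDomain_snd_apply (b : (Fin d × Fin n) →₀ ℕ) (v : Fin n) :
    Finsupp.mapDomain Prod.snd b v = csum b v := by
  classical
  rw [Finsupp.mapDomain, Finsupp.sum_apply, Finsupp.sum]
  rw [Finset.sum_congr rfl fun p (_ : p ∈ b.support) =>
    (Finsupp.single_apply : Finsupp.single p.2 (b p) v = _)]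
  rw [Finset.sum_subset (Finset.subset_univ _) fun p _ hp => by
    rw [Finsupp.notMem_support_iff.mp hp]; simp]
  rw [Fintype.sum_prod_type, csum]
  refine Finset.sum_congr rfl fun i _ => ?_
  rw [Finset.sum_ite_eq' univ v fun j => b (i, j)]
  simp

lemma mapDomain_snd_distrib (u : Fin d → ℕ) (γ : Fin n →₀ ℕ)
    (h : ∑ j : Fin n, γ j = ∑ i : Fin d, u i) :
    Finsupp.mapDomain Prod.snd (distrib n d u γ) = γ := by
  ext v
  rw [mapDomain_snd_apply, csum_distrib u γ h v]

lemma exists_perm (J J' : Fin d → Fin n)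
    (h : ∀ v, (Finset.univ.filter fun i => J i = v).card
      = (Finset.univ.filter fun i => J' i = v).card) :
    ∃ τ : Equiv.Perm (Fin d), J ∘ ⇑τ = J' := by
  classical
  have e : ∀ v, { x // J x = v } ≃ { x // J' x = v } := fun v =>
    Fintype.equivOfCardEq (by rw [Fintype.card_subtype, Fintype.card_subtype, h v])
  refine ⟨((Equiv.sigmaFiberEquiv J').symm.trans
    ((Equiv.sigmaCongrRight fun v => (e v).symm).trans (Equiv.sigmaFiberEquiv J))),
    funext fun x => ?_⟩
  simp only [Function.comp_apply, Equiv.trans_apply, Equiv.sigmaCongrRight_apply]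
  have hx : (Equiv.sigmaFiberEquiv J').symm x = ⟨J' x, ⟨x, rfl⟩⟩ := by
    apply (Equiv.sigmaFiberEquiv J').injective
    simp [Equiv.sigmaFiberEquiv]
  rw [hx]
  exact ((e (J' x)).symm ⟨x, rfl⟩).2

/-- the stabilizer of `J` under precomposition, as fiberwise permutations -/
def stabEquiv (J : Fin d → Fin n) :
    { ρ : Equiv.Perm (Fin d) // ∀ x, J (ρ x) = J x } ≃ ∀ v, Equiv.Perm { x // J x = v } where
  toFun ρ v :=
    { toFun := fun x => ⟨ρ.1 x.1, by rw [ρ.2 x.1]; exact x.2⟩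
      invFun := fun x => ⟨ρ.1.symm x.1, by
        have h := ρ.2 (ρ.1.symm x.1)
        rw [Equiv.apply_symm_apply] at h
        rw [← h]; exact x.2⟩
      left_inv := fun x => Subtype.ext (ρ.1.symm_apply_apply x.1)
      right_inv := fun x => Subtype.ext (ρ.1.apply_symm_apply x.1) }
  invFun g :=
    ⟨(Equiv.sigmaFiberEquiv J).symm.trans
      ((Equiv.sigmaCongrRight g).trans (Equiv.sigmaFiberEquiv J)), by
      intro x
      simp only [Equiv.trans_apply, Equiv.sigmaCongrRight_apply]
      have hx : (Equiv.sigmaFiberEquiv J).symm x = ⟨J x, ⟨x, rfl⟩⟩ := by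
        apply (Equiv.sigmaFiberEquiv J).injective
        simp [Equiv.sigmaFiberEquiv]
      rw [hx]
      exact (g (J x) ⟨x, rfl⟩).2⟩
  left_inv := by
    rintro ⟨ρ, hρ⟩
    apply Subtype.ext
    apply Equiv.ext
    intro x
    show ((Equiv.sigmaFiberEquiv J).symm.trans
      ((Equiv.sigmaCongrRight _).trans (Equiv.sigmaFiberEquiv J))) x = ρ x
    have hx : (Equiv.sigmaFiberEquiv J).symm x = ⟨J x, ⟨x, rfl⟩⟩ := by
      apply (Equiv.sigmaFiberEquiv J).injective
      simp [Equiv.sigmaFiberEquiv]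
    simp only [Equiv.trans_apply, Equiv.sigmaCongrRight_apply, hx]
    rfl
  right_inv := by
    intro g
    funext v
    apply Equiv.ext
    intro x
    apply Subtype.ext
    show ((Equiv.sigmaFiberEquiv J).symm.trans
      ((Equiv.sigmaCongrRight g).trans (Equiv.sigmaFiberEquiv J))) ↑x = ↑(g v x)
    obtain ⟨x', hx'⟩ := x
    subst hx'
    have hx : (Equiv.sigmaFiberEquiv J).symm x' = ⟨J x', ⟨x', rfl⟩⟩ := by
      apply (Equiv.sigmaFiberEquiv J).injective
      simp [Equiv.sigmaFiberEquiv]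
    simp only [Equiv.trans_apply, Equiv.sigmaCongrRight_apply, hx]
    rfl

lemma card_stab (J : Fin d → Fin n) :
    Fintype.card { ρ : Equiv.Perm (Fin d) // ∀ x, J (ρ x) = J x }
      = ∏ v : Fin n, (csum (rowF J) v).factorial := by
  rw [Fintype.card_congr (stabEquiv J), Fintype.card_pi]
  exact Finset.prod_congr rfl fun v _ => by
    rw [Fintype.card_perm, Fintype.card_subtype, csum_rowF]

end Aux4
section Aux5

open Finset

variable {n d : ℕ}

lemma core (F : MvPolynomial (Fin d × Fin n) ℂ) (hF : F ∈ Scomp n d fun _ => 1)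
    (hsym : IsSymm n d F) (b : (Fin d × Fin n) →₀ ℕ) (hml : ∀ i, rsum b i = 1) :
    (d.factorial : ℂ) * F.coeff b
      = ((∏ v : Fin n, ((Finsupp.mapDomain Prod.snd b) v).factorial : ℕ) : ℂ)
          * (pF n d F).coeff (Finsupp.mapDomain Prod.snd b) := by
  classical
  obtain ⟨J, rfl⟩ := exists_rowF hml
  set ε : Fin n →₀ ℕ := Finsupp.mapDomain Prod.snd (rowF J) with hε
  have hcoeff_comp : ∀ τ : Equiv.Perm (Fin d),
      F.coeff (rowF (J ∘ ⇑τ)) = F.coeff (rowF J) := by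
    intro τ
    have hmap : Finsupp.mapDomain (Prod.map ⇑τ id) (rowF (J ∘ ⇑τ)) = rowF J := by
      rw [rowF, rowF, Finsupp.mapDomain_finset_sum]
      exact Eq.trans
        (Finset.sum_congr rfl fun i _ => by rw [Finsupp.mapDomain_single]; rfl)
        (Equiv.sum_comp τ fun i => Finsupp.single (i, J i) 1)
    rw [← hmap, coeff_perm hsym]
  have h1 : (d.factorial : ℂ) * F.coeff (rowF J)
      = ∑ τ : Equiv.Perm (Fin d), F.coeff (rowF (J ∘ ⇑τ)) := by
    rw [Finset.sum_congr rfl fun τ (_ : τ ∈ univ) => hcoeff_comp τ, Finset.sum_const,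
      Finset.card_univ, Fintype.card_perm, Fintype.card_fin, nsmul_eq_mul]
  set T : Finset (Fin d → Fin n) :=
    Finset.univ.filter fun J' => Finsupp.mapDomain Prod.snd (rowF J') = ε with hT
  have hmem : ∀ τ : Equiv.Perm (Fin d), J ∘ ⇑τ ∈ T := by
    intro τ
    rw [hT, Finset.mem_filter]
    refine ⟨Finset.mem_univ _, ?_⟩
    ext v
    rw [mapDomain_snd_apply, csum_rowF, hε, mapDomain_snd_apply, csum_rowF]
    rw [← Fintype.card_subtype, ← Fintype.card_subtype]
    exact Fintype.card_congr (Equiv.subtypeEquiv τ fun i => Iff.rfl)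
  have h2 : ∑ τ : Equiv.Perm (Fin d), F.coeff (rowF (J ∘ ⇑τ))
      = ∑ J' ∈ T, ((Finset.univ.filter
          fun τ : Equiv.Perm (Fin d) => J ∘ ⇑τ = J').card : ℂ) * F.coeff (rowF J') := by
    rw [← Finset.sum_fiberwise_of_maps_to (fun τ _ => hmem τ)
      (fun τ => F.coeff (rowF (J ∘ ⇑τ)))]
    refine Finset.sum_congr rfl fun J' _ => ?_
    rw [Finset.sum_congr rfl fun τ hτ => by
        rw [(Finset.mem_filter.mp hτ).2],
      Finset.sum_const, nsmul_eq_mul]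
  have h3 : ∀ J' ∈ T, (Finset.univ.filter
      fun τ : Equiv.Perm (Fin d) => J ∘ ⇑τ = J').card
        = ∏ v : Fin n, (ε v).factorial := by
    intro J' hJ'
    have hcards : ∀ v, (Finset.univ.filter fun i => J i = v).card
        = (Finset.univ.filter fun i => J' i = v).card := by
      intro v
      have hv := DFunLike.congr_fun (Finset.mem_filter.mp hJ').2 v
      rw [mapDomain_snd_apply, csum_rowF] at hv
      have hv2 : ε v = (Finset.univ.filter fun i => J i = v).card := by
        rw [hε, mapDomain_snd_apply, csum_rowF]
      exact hv2.symm.trans hv.symm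
    obtain ⟨τ₀, hτ₀⟩ := exists_perm J J' hcards
    have eqv : { τ : Equiv.Perm (Fin d) // J ∘ ⇑τ = J' }
        ≃ { ρ : Equiv.Perm (Fin d) // ∀ x, J (ρ x) = J x } :=
      { toFun := fun τ => ⟨τ.1 * τ₀⁻¹, fun x => by
          have ha : J (τ.1 (τ₀⁻¹ x)) = J' (τ₀⁻¹ x) := congrFun τ.2 (τ₀⁻¹ x)
          have hb : J' (τ₀⁻¹ x) = J (τ₀ (τ₀⁻¹ x)) := (congrFun hτ₀ (τ₀⁻¹ x)).symm
          simp only [Equiv.Perm.mul_apply]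
          rw [ha, hb]; exact congrArg J (Equiv.apply_symm_apply τ₀ x)⟩
        invFun := fun ρ => ⟨ρ.1 * τ₀, funext fun x => by
          simp only [Function.comp_apply, Equiv.Perm.mul_apply]
          rw [ρ.2 (τ₀ x)]
          exact congrFun hτ₀ x⟩
        left_inv := fun τ => Subtype.ext (by
          simp [mul_assoc])
        right_inv := fun ρ => Subtype.ext (by
          simp [mul_assoc]) }
    rw [← Fintype.card_subtype, Fintype.card_congr eqv, card_stab J]
    exact Finset.prod_congr rfl fun v _ => by
      rw [hε, mapDomain_snd_apply]
  have h5 : ∑ J' ∈ T, F.coeff (rowF J') = (pF n d F).coeff ε := by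
    have hcoeff : (pF n d F).coeff ε
        = ∑ b' ∈ F.support,
            if Finsupp.mapDomain Prod.snd b' = ε then F.coeff b' else 0 := by
      rw [pF]
      rw [show MvPolynomial.coeff ε (rename Prod.snd F)
          = (Finsupp.mapDomain (Finsupp.mapDomain Prod.snd) (AddMonoidAlgebra.coeff F)) ε from rfl]
      rw [Finsupp.mapDomain, Finsupp.sum_apply, Finsupp.sum]
      exact Finset.sum_congr rfl fun b' _ => Finsupp.single_apply
    have hsplit : ∑ J' ∈ T, F.coeff (rowF J')
        = ∑ J' ∈ T.filter fun J' => rowF J' ∈ F.support, F.coeff (rowF J') := by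
      rw [← Finset.sum_filter_add_sum_filter_not T fun J' => rowF J' ∈ F.support]
      rw [Finset.sum_eq_zero fun J' hJ' =>
        MvPolynomial.notMem_support_iff.mp (Finset.mem_filter.mp hJ').2, add_zero]
    rw [hcoeff, ← Finset.sum_filter, hsplit]
    refine Finset.sum_bij (fun J' _ => rowF J') ?hi ?inj ?surj ?val
    case hi =>
      intro J' hJ'
      rw [Finset.mem_filter]
      exact ⟨(Finset.mem_filter.mp hJ').2,
        (Finset.mem_filter.mp (Finset.mem_filter.mp hJ').1).2⟩
    case inj =>
      intro J₁ _ J₂ _ h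
      exact rowF_injective h
    case surj =>
      intro b' hb'
      have hb'' := Finset.mem_filter.mp hb'
      have hne : F.coeff b' ≠ 0 := MvPolynomial.mem_support_iff.mp hb''.1
      obtain ⟨J', hJ'⟩ := exists_rowF fun i => rsum_eq_one hF hne i
      refine ⟨J', ?_, hJ'.symm⟩
      rw [Finset.mem_filter, hT, Finset.mem_filter]
      exact ⟨⟨Finset.mem_univ _, by rw [← hJ']; exact hb''.2⟩, by rw [← hJ']; exact hb''.1⟩
    case val =>
      intro J' _
      rfl
  rw [h1, h2, Finset.sum_congr rfl fun J' hJ' => by rw [h3 J' hJ'], ← Finset.mul_sum, h5]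

end Aux5
section Aux6

open Finset

variable {n d : ℕ}

lemma prod_descFactorial_eq_one {c a : (Fin d × Fin n) →₀ ℕ}
    (h : ∀ p, a p ≠ 0 → a p = 1 ∧ c p = 0) :
    ∏ p : Fin d × Fin n, (((c + a) p).descFactorial (a p) : ℂ) = 1 := by
  apply Finset.prod_eq_one
  intro p _
  by_cases hp : a p = 0
  · rw [Finsupp.add_apply, hp, Nat.descFactorial_zero, Nat.cast_one]
  · obtain ⟨h1, h2⟩ := h p hp
    rw [Finsupp.add_apply, h1, h2]
    norm_num

lemma apolar_minor (F : MvPolynomial (Fin d × Fin n) ℂ)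
    (hF : F ∈ Scomp n d fun _ => 1) (hsym : IsSymm n d F)
    {i k : Fin d} {j l : Fin n} (hik : i ≠ k) (hjl : j ≠ l) :
    apolar F (X (i, j) * X (k, l) - X (i, l) * X (k, j)) = 0 := by
  classical
  have hXX : ∀ p q : Fin d × Fin n,
      (X p * X q : MvPolynomial (Fin d × Fin n) ℂ)
        = monomial (Finsupp.single p 1 + Finsupp.single q 1) 1 := by
    intro p q
    rw [X, X, monomial_mul, one_mul]
  rw [map_sub, hXX, hXX, apolar_monomial, apolar_monomial, one_smul, one_smul,
    sub_eq_zero]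
  set A₁ : (Fin d × Fin n) →₀ ℕ := Finsupp.single (i, j) 1 + Finsupp.single (k, l) 1
    with hA₁
  set A₂ : (Fin d × Fin n) →₀ ℕ := Finsupp.single (i, l) 1 + Finsupp.single (k, j) 1
    with hA₂
  have hApply : ∀ (j₁ j₂ : Fin n) (p : Fin d × Fin n),
      ((Finsupp.single ((i, j₁) : Fin d × Fin n) 1
          + Finsupp.single ((k, j₂) : Fin d × Fin n) 1) : (Fin d × Fin n) →₀ ℕ) p
        = (if ((i, j₁) : Fin d × Fin n) = p then 1 else 0)
            + (if ((k, j₂) : Fin d × Fin n) = p then 1 else 0) := by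
    intro j₁ j₂ p
    rw [Finsupp.add_apply, Finsupp.single_apply, Finsupp.single_apply]
  have hrow : ∀ (j₁ j₂ : Fin n) (i' : Fin d),
      rsum ((Finsupp.single ((i, j₁) : Fin d × Fin n) 1
          + Finsupp.single ((k, j₂) : Fin d × Fin n) 1) : (Fin d × Fin n) →₀ ℕ) i'
        = (if i = i' then 1 else 0) + (if k = i' then 1 else 0) := by
    intro j₁ j₂ i'
    rw [rsum_add]
    have hsingle : ∀ (i₀ : Fin d) (j₀ : Fin n),
        rsum (Finsupp.single ((i₀, j₀) : Fin d × Fin n) 1) i' = if i₀ = i' then 1 else 0 := by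
      intro i₀ j₀
      rw [rsum]
      by_cases h : i₀ = i'
      · subst h
        rw [if_pos rfl]
        calc ∑ j' : Fin n, (Finsupp.single ((i₀, j₀) : Fin d × Fin n) 1) (i₀, j')
            = ∑ j' : Fin n, if j₀ = j' then 1 else 0 :=
              Finset.sum_congr rfl fun j' _ => by
                rw [Finsupp.single_apply]
                by_cases hj : j₀ = j'
                · rw [if_pos (by rw [hj]), if_pos hj]
                · rw [if_neg (by simp [hj]), if_neg hj]
          _ = 1 := by rw [Finset.sum_ite_eq univ j₀ fun _ => 1]; simp
      · rw [if_neg h]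
        apply Finset.sum_eq_zero
        intro j' _
        rw [Finsupp.single_apply, if_neg (by simp [h])]
    rw [hsingle, hsingle]
  apply MvPolynomial.ext
  intro c
  rw [coeff_diffMon, coeff_diffMon]
  by_cases hc : rsum c i = 0 ∧ rsum c k = 0
  · -- the two coefficients agree, and both descFactorial products are 1
    have hczero : ∀ p : Fin d × Fin n, p.1 = i ∨ p.1 = k → c p = 0 := by
      intro p hp
      have h1 := apply_le_rsum c p
      rcases hp with h | h <;> rw [h] at h1 <;> omega
    have hDcond : ∀ (j₁ j₂ : Fin n), j₁ ≠ j₂ → ∀ p : Fin d × Fin n,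
        ((Finsupp.single ((i, j₁) : Fin d × Fin n) 1
          + Finsupp.single ((k, j₂) : Fin d × Fin n) 1) : (Fin d × Fin n) →₀ ℕ) p ≠ 0 →
        ((Finsupp.single ((i, j₁) : Fin d × Fin n) 1
          + Finsupp.single ((k, j₂) : Fin d × Fin n) 1) : (Fin d × Fin n) →₀ ℕ) p = 1
            ∧ c p = 0 := by
      intro j₁ j₂ _ p hp
      rw [hApply] at hp ⊢
      by_cases h1 : (i, j₁) = p <;> by_cases h2 : (k, j₂) = p
      · exact absurd (h1 ▸ h2 ▸ rfl : ((i : Fin d), j₁) = (k, j₂))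
          (by simp [Prod.ext_iff]; intro h; exact absurd h hik)
      · refine ⟨by rw [if_pos h1, if_neg h2], hczero p (Or.inl (by rw [← h1]))⟩
      · refine ⟨by rw [if_neg h1, if_pos h2], hczero p (Or.inr (by rw [← h2]))⟩
      · exact absurd (by rw [if_neg h1, if_neg h2]) hp
    have hD₁ := prod_descFactorial_eq_one (a := A₁) (c := c) (hDcond j l hjl)
    have hD₂ := prod_descFactorial_eq_one (a := A₂) (c := c) (hDcond l j hjl.symm)
    rw [hD₁, hD₂, mul_one, mul_one]
    -- coefficients agree via the swap
    have hswap : Finsupp.mapDomain (Prod.map ⇑(Equiv.swap i k) id) (c + A₂) = c + A₁ := by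
      rw [Finsupp.mapDomain_add]
      congr 1
      · rw [show (Prod.map ⇑(Equiv.swap i k) id : Fin d × Fin n → Fin d × Fin n)
            = fun p => Prod.map (⇑(Equiv.swap i k)) id p from rfl]
        rw [Finsupp.mapDomain_congr (g := id), Finsupp.mapDomain_id]
        intro p hp
        have hcp : c p ≠ 0 := Finsupp.mem_support_iff.mp hp
        have hpi : p.1 ≠ i := fun h => hcp (hczero p (Or.inl h))
        have hpk : p.1 ≠ k := fun h => hcp (hczero p (Or.inr h))
        show (Equiv.swap i k p.1, p.2) = p
        rw [Equiv.swap_apply_of_ne_of_ne hpi hpk]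
      · rw [hA₂, Finsupp.mapDomain_add, Finsupp.mapDomain_single,
          Finsupp.mapDomain_single, hA₁]
        rw [show (Prod.map ⇑(Equiv.swap i k) id ((i : Fin d), l)) = ((k : Fin d), l) from by
          simp [Equiv.swap_apply_left]]
        rw [show (Prod.map ⇑(Equiv.swap i k) id ((k : Fin d), j)) = ((i : Fin d), j) from by
          simp [Equiv.swap_apply_right]]
        rw [add_comm]
    rw [← hswap, coeff_perm hsym]
  · -- both coefficients vanish
    have key : ∀ A : (Fin d × Fin n) →₀ ℕ, rsum A i = 1 → rsum A k = 1 →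
        F.coeff (c + A) = 0 := by
      intro A h1 h2
      by_contra hne
      have hri := rsum_eq_one hF hne i
      have hrk := rsum_eq_one hF hne k
      rw [rsum_add, h1] at hri
      rw [rsum_add, h2] at hrk
      exact hc ⟨by omega, by omega⟩
    rw [key A₁ (by rw [hA₁, hrow]; simp [hik, Ne.symm hik])
        (by rw [hA₁, hrow]; simp [hik, Ne.symm hik]),
      key A₂ (by rw [hA₂, hrow]; simp [hik, Ne.symm hik])
        (by rw [hA₂, hrow]; simp [hik, Ne.symm hik]),
      zero_mul, zero_mul]

end Aux6
/-- Proposition 4.6: if `F` is a symmetric tensor and `I ⊆ Ann(p_F)`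
is a homogeneous ideal, then `Υ(I) ⊆ Ann(F)`. -/
theorem stmt_8 (n d : ℕ) (hn : 0 < n) (hd : 0 < d)
    (F : MvPolynomial (Fin d × Fin n) ℂ)
    (hF : F ∈ Scomp n d fun _ => 1) (hsym : IsSymm n d F)
    (I : Ideal (MvPolynomial (Fin n) ℂ)) (hhom : IsHomogV n I)
    (hI : Submodule.restrictScalars ℂ I ≤ ann (pF n d F)) :
    Upsilon n d I ≤ ann F := by
  classical
  rw [Upsilon]
  apply sup_le
  · -- the determinantal relations
    intro x hx
    have hx' : x ∈ IR n d := hx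
    have hspan : IR n d ≤ annIdeal F := by
      rw [IR, Ideal.span_le]
      rintro q ⟨i, k, j, l, hik, hjl, rfl⟩
      exact apolar_minor F hF hsym (ne_of_lt hik) (ne_of_lt hjl)
    exact mem_ann_iff.mpr (mem_annIdeal_iff.mp (hspan hx'))
  · apply iSup_le
    intro u
    intro x hx
    rw [Submodule.mem_map] at hx
    obtain ⟨ψ, hψ, rfl⟩ := hx
    obtain ⟨hψI, hψV⟩ := hψ
    rw [mem_ann_iff]
    have hψ0 : apolar (pF n d F) ψ = 0 := mem_ann_iff.mp (hI hψI)
    have hdeg : ∀ γ ∈ ψ.support, ∑ j : Fin n, γ j = ∑ i : Fin d, u i :=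
      fun γ hγ => vdeg hψV (MvPolynomial.mem_support_iff.mp hγ)
    rw [show psi n d u ψ = AddMonoidAlgebra.ofCoeff (Finsupp.mapDomain (distrib n d u) (AddMonoidAlgebra.coeff ψ)) from rfl]
    have happly : apolar F (AddMonoidAlgebra.ofCoeff (Finsupp.mapDomain (distrib n d u) (AddMonoidAlgebra.coeff ψ)))
        = Finsupp.sum (AddMonoidAlgebra.coeff ψ) fun γ r => r • diffMon (distrib n d u γ) F := by
      rw [apolar_apply]
      exact Finsupp.sum_mapDomain_index (fun γ => zero_smul ℂ _) fun γ r s => add_smul r s _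
    rw [happly]
    apply MvPolynomial.ext
    intro c
    rw [MvPolynomial.coeff_zero]
    have hexp : (Finsupp.sum (AddMonoidAlgebra.coeff ψ) fun γ r => r • diffMon (distrib n d u γ) F).coeff c
        = ∑ γ ∈ ψ.support, ψ.coeff γ * (F.coeff (c + distrib n d u γ)
            * ∏ p : Fin d × Fin n,
                (((c + distrib n d u γ) p).descFactorial (distrib n d u γ p) : ℂ)) := by
      rw [Finsupp.sum, MvPolynomial.coeff_sum]
      refine Finset.sum_congr rfl fun γ _ => ?_
      rw [MvPolynomial.coeff_smul, coeff_diffMon, smul_eq_mul]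
      rfl
    rw [hexp]
    by_cases hu : ∀ i, u i ≤ 1
    · by_cases hc : ∀ i, rsum c i + u i = 1
      · -- the main case
        set δ : Fin n →₀ ℕ := Finsupp.mapDomain Prod.snd c with hδ
        have hyp : ∑ γ ∈ ψ.support, ψ.coeff γ * ((pF n d F).coeff (δ + γ)
            * ∏ v : Fin n, (((δ + γ) v).descFactorial (γ v) : ℂ)) = 0 := by
          have h0 := congrArg (MvPolynomial.coeff δ) hψ0
          rw [coeff_apolar, MvPolynomial.coeff_zero] at h0
          exact h0
        have key : ∀ γ ∈ ψ.support,
            (∏ v : Fin n, ((δ v).factorial : ℂ)) * (ψ.coeff γ * ((pF n d F).coeff (δ + γ)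
              * ∏ v : Fin n, (((δ + γ) v).descFactorial (γ v) : ℂ)))
            = (d.factorial : ℂ) * (ψ.coeff γ * (F.coeff (c + distrib n d u γ)
              * ∏ p : Fin d × Fin n,
                  (((c + distrib n d u γ) p).descFactorial (distrib n d u γ p) : ℂ))) := by
          intro γ hγ
          have hsum : ∑ j : Fin n, γ j = ∑ i : Fin d, u i := hdeg γ hγ
          have hrs : ∀ i', rsum (distrib n d u γ) i' = u i' := rsum_distrib u γ hsum
          have hml : ∀ i', rsum (c + distrib n d u γ) i' = 1 := fun i' => by
            rw [rsum_add, hrs]; exact hc i'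
          have hone : (∏ p : Fin d × Fin n,
              (((c + distrib n d u γ) p).descFactorial (distrib n d u γ p) : ℂ)) = 1 := by
            apply prod_descFactorial_eq_one
            intro p hp
            have h1 : distrib n d u γ p ≤ u p.1 := by
              rw [← hrs p.1]
              exact apply_le_rsum _ p
            have h2 : distrib n d u γ p = 1 := by
              have := hu p.1; omega
            refine ⟨h2, ?_⟩
            have h3 : u p.1 = 1 := by have := hu p.1; omega
            have h4 : rsum c p.1 = 0 := by have := hc p.1; omega
            have h5 := apply_le_rsum c p
            omega
          have hmd : Finsupp.mapDomain Prod.snd (c + distrib n d u γ) = δ + γ := by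
            rw [Finsupp.mapDomain_add, mapDomain_snd_distrib u γ hsum]
          have hcore := core F hF hsym (c + distrib n d u γ) hml
          rw [hmd] at hcore
          rw [hone, mul_one]
          have hfac : (∏ v : Fin n, ((δ v).factorial : ℂ))
              * (∏ v : Fin n, (((δ + γ) v).descFactorial (γ v) : ℂ))
              = ((∏ v : Fin n, ((δ + γ) v).factorial : ℕ) : ℂ) := by
            push_cast
            rw [← Finset.prod_mul_distrib]
            refine Finset.prod_congr rfl fun v _ => ?_
            rw [← Nat.cast_mul]
            congr 1
            have hle : γ v ≤ (δ + γ) v := by rw [Finsupp.add_apply]; omega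
            have hsub : (δ + γ) v - γ v = δ v := by rw [Finsupp.add_apply]; omega
            rw [← hsub]
            exact Nat.factorial_mul_descFactorial hle
          calc (∏ v : Fin n, ((δ v).factorial : ℂ)) * (ψ.coeff γ * ((pF n d F).coeff (δ + γ)
              * ∏ v : Fin n, (((δ + γ) v).descFactorial (γ v) : ℂ)))
              = ψ.coeff γ * (((∏ v : Fin n, ((δ + γ) v).factorial : ℕ) : ℂ)
                  * (pF n d F).coeff (δ + γ)) := by rw [← hfac]; ring
            _ = ψ.coeff γ * ((d.factorial : ℂ) * F.coeff (c + distrib n d u γ)) := by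
                rw [← hcore]
            _ = (d.factorial : ℂ) * (ψ.coeff γ * F.coeff (c + distrib n d u γ)) := by ring
        have hsum2 := Finset.sum_congr rfl key
        rw [← Finset.mul_sum, ← Finset.mul_sum, hyp, mul_zero] at hsum2
        have hd0 : (d.factorial : ℂ) ≠ 0 := Nat.cast_ne_zero.mpr d.factorial_ne_zero
        have := (mul_eq_zero.mp hsum2.symm).resolve_left hd0
        exact this
      · -- a row mismatch kills every term
        push_neg at hc
        obtain ⟨i, hi⟩ := hc
        apply Finset.sum_eq_zero
        intro γ hγ
        have hz : F.coeff (c + distrib n d u γ) = 0 := by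
          by_contra hne
          have h1 := rsum_eq_one hF hne i
          rw [rsum_add, rsum_distrib u γ (hdeg γ hγ) i] at h1
          exact hi h1
        rw [hz, zero_mul, mul_zero]
    · -- some `u i ≥ 2` kills every term
      push_neg at hu
      obtain ⟨i, hi⟩ := hu
      apply Finset.sum_eq_zero
      intro γ hγ
      have hz : F.coeff (c + distrib n d u γ) = 0 := by
        by_contra hne
        have h1 := rsum_eq_one hF hne i
        rw [rsum_add, rsum_distrib u γ (hdeg γ hγ) i] at h1
        omega
      rw [hz, zero_mul, mul_zero]

end BorderComon
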